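/- Let 1 < α ≤ 2 and ψ(x) = (x − ⌊x⌋) − (x − ⌊x⌋)². Then ∫_0^∞ ψ(x) / x^{2 − 1/α} dx ≥ α³ / (2(α−1)(2α+1)). -/

import Mathlib

open MeasureTheory Real Set intervalIntegral Filter

noncomputable def psi (x : ℝ) : ℝ := (x - ⌊x⌋) - (x - ⌊x⌋) ^ 2

lemma psi_eq (x : ℝ) : psi x = Int.fract x - Int.fract x ^ 2 := by
  unfold psi; rw [Int.self_sub_floor]

lemma psi_nonneg (x : ℝ) : 0 ≤ psi x := by
  rw [psi_eq]
  have h1 := Int.fract_nonneg x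
  have h2 := (Int.fract_lt_one x).le
  nlinarith

lemma psi_le_quarter (x : ℝ) : psi x ≤ 1/4 := by
  rw [psi_eq]; nlinarith [sq_nonneg (Int.fract x - 1/2)]

lemma psi_le_self {x : ℝ} (hx : 0 ≤ x) : psi x ≤ x := by
  rw [psi_eq]
  have h1 := Int.fract_nonneg x
  have h3 : Int.fract x ≤ x := by
    have h4 : (0:ℝ) ≤ ⌊x⌋ := by exact_mod_cast Int.floor_nonneg.mpr hx
    have h5 : x - ⌊x⌋ = Int.fract x := Int.self_sub_floor x
    linarith
  nlinarith

lemma measurable_psi : Measurable psi := by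
  have : psi = fun x => Int.fract x - Int.fract x ^ 2 := funext psi_eq
  rw [this]
  exact measurable_fract.sub (measurable_fract.pow_const 2)

lemma integrable_f {s : ℝ} (h1 : 1 < s) (h2 : s < 2) :
    IntegrableOn (fun x => psi x / x ^ s) (Set.Ioi (0:ℝ)) := by
  have hmeas : AEStronglyMeasurable (fun x => psi x / x ^ s) (volume.restrict (Set.Ioi (0:ℝ))) :=
    (measurable_psi.div (by fun_prop : Measurable fun x : ℝ => x ^ s)).aestronglyMeasurable
  have hsplit : Set.Ioi (0:ℝ) = Set.Ioc (0:ℝ) 1 ∪ Set.Ioi (1:ℝ) := by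
    rw [Set.Ioc_union_Ioi_eq_Ioi]; norm_num
  rw [hsplit]
  apply MeasureTheory.IntegrableOn.union
  · -- on Ioc 0 1, dominate by x ^ (1 - s)
    have hg : IntegrableOn (fun x : ℝ => x ^ (1 - s)) (Set.Ioc (0:ℝ) 1) :=
      (intervalIntegrable_rpow' (by linarith : (-1:ℝ) < 1 - s)).1
    apply Integrable.mono' hg (hmeas.mono_set (by rw [hsplit]; exact Set.subset_union_left))
    filter_upwards [ae_restrict_mem measurableSet_Ioc] with x hx
    have hx0 : 0 < x := hx.1
    have hxs : 0 < x ^ s := rpow_pos_of_pos hx0 s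
    rw [Real.norm_eq_abs, abs_of_nonneg (div_nonneg (psi_nonneg x) hxs.le)]
    rw [rpow_sub hx0, rpow_one]
    gcongr
    exact psi_le_self hx0.le
  · -- on Ioi 1, dominate by (1/4) * x ^ (-s)
    have hg : IntegrableOn (fun x : ℝ => (1/4) * x ^ (-s)) (Set.Ioi (1:ℝ)) :=
      (integrableOn_Ioi_rpow_of_lt (by linarith) one_pos).const_mul _
    apply Integrable.mono' hg (hmeas.mono_set (by rw [hsplit]; exact Set.subset_union_right))
    filter_upwards [ae_restrict_mem measurableSet_Ioi] with x hx
    have hx0 : (0:ℝ) < x := lt_trans one_pos hx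
    have hxs : 0 < x ^ s := rpow_pos_of_pos hx0 s
    rw [Real.norm_eq_abs, abs_of_nonneg (div_nonneg (psi_nonneg x) hxs.le)]
    rw [rpow_neg hx0.le]
    rw [div_eq_mul_inv]
    exact mul_le_mul_of_nonneg_right (psi_le_quarter x) (inv_nonneg.mpr hxs.le)

lemma key_pointwise {β a : ℝ} (hβ1 : 0 < β) (hβ2 : β ≤ 1) (ha : 1 ≤ a) :
    a ^ (-β) - (a + 1) ^ (-β) ≤ β * a ^ (-(1 + β)) := by
  have ha0 : 0 < a := lt_of_lt_of_le one_pos ha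
  have hx0 : 0 < a⁻¹ := inv_pos.mpr ha0
  have hb : ((1 + a⁻¹) : ℝ) ^ β ≤ 1 + β * a⁻¹ :=
    rpow_one_add_le_one_add_mul_self (by linarith) hβ1.le hβ2
  have hc : 0 < ((1 + a⁻¹) : ℝ) ^ β := rpow_pos_of_pos (by linarith) _
  have h2 : (1 : ℝ) - β * a⁻¹ ≤ (1 + a⁻¹) ^ (-β) := by
    rw [rpow_neg (by linarith : (0:ℝ) ≤ 1 + a⁻¹)]
    rcases le_or_gt (1 - β * a⁻¹) 0 with h | h
    · exact h.trans (inv_nonneg.mpr hc.le)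
    · rw [le_inv_comm₀ h hc]
      calc (1 + a⁻¹) ^ β ≤ 1 + β * a⁻¹ := hb
        _ ≤ (1 - β * a⁻¹)⁻¹ := by
            have hm : (1 + β * a⁻¹) * (1 - β * a⁻¹) ≤ 1 := by
              nlinarith [sq_nonneg (β * a⁻¹)]
            have h3 := mul_le_mul_of_nonneg_right hm (inv_pos.mpr h).le
            rwa [mul_assoc, mul_inv_cancel₀ h.ne', mul_one, one_mul] at h3
  have hsplit : (a + 1 : ℝ) ^ (-β) = a ^ (-β) * (1 + a⁻¹) ^ (-β) := by
    rw [← Real.mul_rpow ha0.le (by linarith)]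
    congr 1
    field_simp
  have hpow : a ^ (-(1 + β)) = a ^ (-β) * a⁻¹ := by
    rw [show -(1+β) = -β + (-1) by ring, rpow_add ha0, rpow_neg_one]
  rw [hsplit, hpow]
  have hnn : 0 ≤ a ^ (-β) := (rpow_pos_of_pos ha0 _).le
  nlinarith [mul_le_mul_of_nonneg_left h2 hnn]

lemma I0_eq {α : ℝ} (hα : 1 < α) :
    ∫ x in (0:ℝ)..1, psi x / x ^ (2 - 1/α) = α^2/(α+1) := by
  have hα0 : 0 < α := by linarith
  have h1 : (0:ℝ) < 1/α := by positivity
  have h2 : 1/α < 1 := by rw [div_lt_one hα0]; exact hα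
  have hcong : ∀ x ∈ Set.uIcc (0:ℝ) 1, psi x / x ^ (2 - 1/α) = x ^ (1/α - 1) - x ^ (1/α) := by
    intro x hx
    rw [Set.uIcc_of_le (by norm_num : (0:ℝ) ≤ 1)] at hx
    rcases eq_or_lt_of_le hx.1 with h0 | h0
    · rw [← h0, zero_rpow (sub_ne_zero.mpr (ne_of_lt h2)),
        zero_rpow (ne_of_gt h1)]
      simp [psi]
    · have hpsi : psi x = x - x ^ 2 := by
        rcases eq_or_lt_of_le hx.2 with h1' | h1'
        · subst h1'; norm_num [psi_eq, Int.fract_one]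
        · rw [psi_eq, Int.fract_eq_self.mpr ⟨h0.le, h1'⟩]
      rw [hpsi, div_eq_iff (rpow_pos_of_pos h0 _).ne', sub_mul,
        ← rpow_add h0, ← rpow_add h0,
        show 1/α - 1 + (2 - 1/α) = 1 by ring, show 1/α + (2 - 1/α) = 2 by ring,
        rpow_one, show (2:ℝ) = ((2:ℕ):ℝ) by norm_num, rpow_natCast]
  rw [intervalIntegral.integral_congr hcong,
    intervalIntegral.integral_sub (intervalIntegrable_rpow' (by linarith))
      (intervalIntegrable_rpow' (by linarith)),
    integral_rpow (Or.inl (by linarith)), integral_rpow (Or.inl (by linarith))]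
  rw [one_rpow, one_rpow, zero_rpow (by linarith : 1/α - 1 + 1 ≠ 0),
    zero_rpow (by positivity : 1/α + 1 ≠ 0)]
  field_simp
  ring

lemma In_ge {β : ℝ} (hβ1 : 0 < β) (hβ2 : β ≤ 1) (n : ℕ)
    (hint : IntervalIntegrable (fun x => psi x / x ^ (1 + β)) volume ((n:ℝ)+1) ((n:ℝ)+2)) :
    ∫ t in (0:ℝ)..1, (t - t^2) * ((((n:ℝ)+1+t) ^ (-β) - ((n:ℝ)+2+t) ^ (-β)) / β)
      ≤ ∫ x in ((n:ℝ)+1)..((n:ℝ)+2), psi x / x ^ (1 + β) := by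
  have hshift : ∫ x in ((n:ℝ)+1)..((n:ℝ)+2), psi x / x ^ (1 + β)
      = ∫ t in (0:ℝ)..1, psi (t + ((n:ℝ)+1)) / (t + ((n:ℝ)+1)) ^ (1 + β) := by
    rw [intervalIntegral.integral_comp_add_right (fun x => psi x / x ^ (1 + β)) ((n:ℝ)+1)]
    norm_num
    congr 1
    ring
  rw [hshift]
  apply intervalIntegral.integral_mono_on (by norm_num)
  · -- integrability of LHS integrand
    apply ContinuousOn.intervalIntegrable
    apply ContinuousOn.mul
    · fun_prop
    · apply ContinuousOn.div_const
      apply ContinuousOn.sub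
      · apply ContinuousOn.rpow_const (by fun_prop)
        intro t ht
        rw [Set.uIcc_of_le (by norm_num : (0:ℝ) ≤ 1)] at ht
        have hn : (0:ℝ) ≤ n := Nat.cast_nonneg n
        left; intro hcon; nlinarith [ht.1]
      · apply ContinuousOn.rpow_const (by fun_prop)
        intro t ht
        rw [Set.uIcc_of_le (by norm_num : (0:ℝ) ≤ 1)] at ht
        have hn : (0:ℝ) ≤ n := Nat.cast_nonneg n
        left; intro hcon; nlinarith [ht.1]
  · -- integrability of RHS integrand
    have h2 := hint.comp_add_right ((n:ℝ)+1)
    have e1 : (n:ℝ) + 1 - ((n:ℝ)+1) = 0 := by ring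
    have e2 : (n:ℝ) + 2 - ((n:ℝ)+1) = 1 := by ring
    rwa [e1, e2] at h2
  · intro t ht
    have ht0 : 0 ≤ t := ht.1
    have ht1 : t ≤ 1 := ht.2
    have hb0 : (0:ℝ) < t + ((n:ℝ)+1) := by positivity
    rcases eq_or_lt_of_le ht1 with h1 | h1
    · -- t = 1 : LHS is 0, RHS nonneg
      subst h1
      have : (1:ℝ) - 1^2 = 0 := by norm_num
      rw [this, zero_mul]
      exact div_nonneg (psi_nonneg _) (rpow_pos_of_pos hb0 _).le
    · have hfr : psi (t + ((n:ℝ)+1)) = t - t^2 := by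
        have : t + ((n:ℝ)+1) = t + ((n+1 : ℕ) : ℝ) := by push_cast; ring
        rw [psi_eq, this, Int.fract_add_natCast, Int.fract_eq_self.mpr ⟨ht0, h1⟩]
      rw [hfr]
      have hkey := key_pointwise hβ1 hβ2 (by push_cast; linarith : (1:ℝ) ≤ t + ((n:ℝ)+1))
      have e3 : t + ((n:ℝ)+1) + 1 = (n:ℝ) + 2 + t := by ring
      have e4 : t + ((n:ℝ)+1) = (n:ℝ) + 1 + t := by ring
      rw [e3, e4] at hkey
      have htt : 0 ≤ t - t^2 := by nlinarith
      have hdiv : (((n:ℝ)+1+t) ^ (-β) - ((n:ℝ)+2+t) ^ (-β)) / β ≤ ((n:ℝ)+1+t) ^ (-(1+β)) := by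
        rw [div_le_iff₀ hβ1]
        linarith [hkey]
      calc (t - t^2) * ((((n:ℝ)+1+t) ^ (-β) - ((n:ℝ)+2+t) ^ (-β)) / β)
          ≤ (t - t^2) * ((n:ℝ)+1+t) ^ (-(1+β)) := by
            exact mul_le_mul_of_nonneg_left hdiv htt
        _ = (t - t^2) / (t + ((n:ℝ)+1)) ^ (1+β) := by
            rw [rpow_neg (by positivity), div_eq_mul_inv, e4]

lemma cont_integrand {β c d : ℝ} (hc : 0 < c) (hd : 0 < d) :
    IntervalIntegrable (fun t : ℝ => (t - t^2) * (((c+t) ^ (-β) - (d+t) ^ (-β)) / β))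
      volume 0 1 := by
  apply ContinuousOn.intervalIntegrable
  apply ContinuousOn.mul
  · fun_prop
  · apply ContinuousOn.div_const
    apply ContinuousOn.sub
    · apply ContinuousOn.rpow_const (by fun_prop)
      intro t ht
      rw [Set.uIcc_of_le (by norm_num : (0:ℝ) ≤ 1)] at ht
      left; intro hcon; nlinarith [ht.1]
    · apply ContinuousOn.rpow_const (by fun_prop)
      intro t ht
      rw [Set.uIcc_of_le (by norm_num : (0:ℝ) ≤ 1)] at ht
      left; intro hcon; nlinarith [ht.1]

lemma sixth : (∫ t in (0:ℝ)..1, (t - t^2)) = 1/6 := by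
  rw [intervalIntegral.integral_sub intervalIntegral.intervalIntegrable_id
    (intervalIntegral.intervalIntegrable_pow 2), integral_id, integral_pow]
  norm_num

lemma sum_bound {β : ℝ} (hβ1 : 0 < β) (hβ2 : β ≤ 1) (K : ℕ) :
    ((2:ℝ) ^ (-β) - ((K:ℝ)+1) ^ (-β)) / (6*β)
      ≤ ∑ n ∈ Finset.range K,
          ∫ t in (0:ℝ)..1, (t - t^2) * ((((n:ℝ)+1+t) ^ (-β) - ((n:ℝ)+2+t) ^ (-β)) / β) := by
  have hKpos : (0:ℝ) < (K:ℝ) + 1 := by positivity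
  rw [← intervalIntegral.integral_finset_sum (μ := volume) (a := (0:ℝ)) (b := 1)
    (s := Finset.range K)
    (f := fun (n : ℕ) (t : ℝ) => (t - t^2) * ((((n:ℝ)+1+t) ^ (-β) - ((n:ℝ)+2+t) ^ (-β)) / β))
    (fun n _ => cont_integrand (β := β) (by positivity : (0:ℝ) < (n:ℝ)+1)
      (by positivity : (0:ℝ) < (n:ℝ)+2))]
  have htel : ∀ t : ℝ, ∑ n ∈ Finset.range K,
      (t - t^2) * ((((n:ℝ)+1+t) ^ (-β) - ((n:ℝ)+2+t) ^ (-β)) / β)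
      = (t - t^2) * ((((1:ℝ)+t) ^ (-β) - (((K:ℝ)+1+t) ^ (-β))) / β) := by
    intro t
    rw [← Finset.mul_sum, ← Finset.sum_div]
    congr 2
    have h := Finset.sum_range_sub' (fun n : ℕ => ((n:ℝ)+1+t) ^ (-β)) K
    simp only [Nat.cast_zero, zero_add] at h
    rw [← h]
    apply Finset.sum_congr rfl
    intro n _
    congr 2
    push_cast
    ring
  rw [intervalIntegral.integral_congr (fun t _ => htel t)]
  have hmono : ∫ t in (0:ℝ)..1, (t - t^2) * (((2:ℝ) ^ (-β) - (((K:ℝ)+1) ^ (-β))) / β)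
      ≤ ∫ t in (0:ℝ)..1, (t - t^2) * ((((1:ℝ)+t) ^ (-β) - (((K:ℝ)+1+t) ^ (-β))) / β) := by
    apply intervalIntegral.integral_mono_on (by norm_num)
    · exact (intervalIntegral.intervalIntegrable_id.sub
        (intervalIntegral.intervalIntegrable_pow 2)).mul_const _
    · exact cont_integrand one_pos hKpos
    · intro t ht
      have htt : 0 ≤ t - t^2 := by nlinarith [ht.1, ht.2]
      apply mul_le_mul_of_nonneg_left _ htt
      have hb1 : (2:ℝ) ^ (-β) ≤ (1+t) ^ (-β) :=
        Real.rpow_le_rpow_of_nonpos (by linarith [ht.1]) (by linarith [ht.2]) (by linarith)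
      have hb2 : ((K:ℝ)+1+t) ^ (-β) ≤ ((K:ℝ)+1) ^ (-β) :=
        Real.rpow_le_rpow_of_nonpos hKpos (by linarith [ht.1]) (by linarith)
      gcongr
  refine le_trans (le_of_eq ?_) hmono
  rw [intervalIntegral.integral_mul_const, sixth]
  ring

lemma two_rpow_bound {β : ℝ} (hβ1 : 0 < β) : 1 - (7/10) * β ≤ (2:ℝ) ^ (-β) := by
  have h1 : (2:ℝ) ^ (-β) = Real.exp (Real.log 2 * (-β)) := by
    rw [Real.rpow_def_of_pos two_pos]
  have h2 : 1 + Real.log 2 * (-β) ≤ Real.exp (Real.log 2 * (-β)) := by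
    linarith [Real.add_one_le_exp (Real.log 2 * (-β))]
  have h3 : Real.log 2 < 0.6931471808 := Real.log_two_lt_d9
  have h4 : 0 < Real.log 2 := Real.log_pos (by norm_num)
  rw [h1]
  nlinarith

lemma final_ineq {α : ℝ} (hα1 : 1 < α) (hα2 : α ≤ 2) :
    α^3 / (2*(α-1)*(2*α+1)) ≤ α^2/(α+1) + (2:ℝ) ^ (-(1-1/α)) / (6*(1-1/α)) := by
  have hα0 : (0:ℝ) < α := by linarith
  have hβ1 : 0 < 1 - 1/α := by
    rw [sub_pos, div_lt_one hα0]; exact hα1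
  have hαm : (0:ℝ) < α - 1 := by linarith
  have hd1 : (0:ℝ) < 6*(1-1/α) := by linarith
  have hd2 : (0:ℝ) < 6*(α-1) := by linarith
  have hd3 : (0:ℝ) < α + 1 := by linarith
  have h2 : 1 - (7/10) * (1-1/α) ≤ (2:ℝ) ^ (-(1-1/α)) := two_rpow_bound hβ1
  have step : (2:ℝ) ^ (-(1-1/α)) / (6*(1-1/α)) ≥ (1 - (7/10)*(1-1/α)) / (6*(1-1/α)) := by
    exact div_le_div_of_nonneg_right h2 hd1.le
  have key : α^3 / (2*(α-1)*(2*α+1)) ≤ α^2/(α+1) + (1 - (7/10)*(1-1/α)) / (6*(1-1/α)) := by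
    have e1 : (1 - (7/10)*(1-1/α)) / (6*(1-1/α)) = (α - (7/10)*(α-1)) / (6*(α-1)) := by
      rw [div_eq_div_iff hd1.ne' hd2.ne']
      field_simp
    rw [e1, div_add_div _ _ hd3.ne' hd2.ne',
      div_le_div_iff₀ (by nlinarith) (by positivity)]
    nlinarith [mul_nonneg (sub_nonneg.mpr hα1.le)
      (show (0:ℝ) ≤ 90*α^3+6*α^2-31*α-7 by nlinarith), sq_nonneg α, sq_nonneg (α-1)]
  linarith [step, key]

theorem stmt15 (α : ℝ) (hα1 : 1 < α) (hα2 : α ≤ 2) :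
    α ^ 3 / (2 * (α - 1) * (2 * α + 1)) ≤ ∫ x in Set.Ioi (0:ℝ), psi x / x ^ (2 - 1/α) := by
  have hα0 : (0:ℝ) < α := by linarith
  have hβ1 : 0 < 1 - 1/α := by rw [sub_pos, div_lt_one hα0]; exact hα1
  have hinv : 0 < 1/α := by positivity
  have hβ2 : 1 - 1/α ≤ 1 := by linarith
  have hs : 2 - 1/α = 1 + (1 - 1/α) := by ring
  have hint : IntegrableOn (fun x => psi x / x ^ (2 - 1/α)) (Set.Ioi (0:ℝ)) :=
    integrable_f (by linarith) (by linarith)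
  have hae : 0 ≤ᵐ[volume.restrict (Set.Ioi (0:ℝ))] fun x => psi x / x ^ (2 - 1/α) := by
    filter_upwards [ae_restrict_mem measurableSet_Ioi] with x hx
    exact div_nonneg (psi_nonneg x) (rpow_nonneg (le_of_lt hx) _)
  have hik : ∀ k : ℕ, IntervalIntegrable (fun x => psi x / x ^ (2 - 1/α))
      volume (k:ℝ) ((k:ℝ)+1) := by
    intro k
    rw [intervalIntegrable_iff_integrableOn_Ioc_of_le (by linarith : (k:ℝ) ≤ (k:ℝ)+1)]
    apply hint.mono_set
    intro x hx
    exact lt_of_le_of_lt (Nat.cast_nonneg k) hx.1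
  have hstep : ∀ K : ℕ, α^2/(α+1) + ((2:ℝ)^(-(1-1/α)) - ((K:ℝ)+1)^(-(1-1/α)))/(6*(1-1/α))
      ≤ ∫ x in Set.Ioi (0:ℝ), psi x / x ^ (2 - 1/α) := by
    intro K
    have hB : ∑ k ∈ Finset.range (K+1),
        ∫ x in ((k:ℕ):ℝ)..(((k+1:ℕ)):ℝ), psi x / x ^ (2 - 1/α)
        = ∫ x in (((0:ℕ)):ℝ)..(((K+1:ℕ)):ℝ), psi x / x ^ (2 - 1/α) := by
      apply intervalIntegral.sum_integral_adjacent_intervals (a := fun k : ℕ => (k:ℝ))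
      intro k _
      have h := hik k
      push_cast
      exact h
    have hA : ∫ x in (((0:ℕ)):ℝ)..(((K+1:ℕ)):ℝ), psi x / x ^ (2 - 1/α)
        ≤ ∫ x in Set.Ioi (0:ℝ), psi x / x ^ (2 - 1/α) := by
      rw [intervalIntegral.integral_of_le (by exact_mod_cast Nat.zero_le (K+1))]
      apply setIntegral_mono_set hint hae
      exact HasSubset.Subset.eventuallyLE
        (by push_cast; exact Set.Ioc_subset_Ioi_self)
    rw [← hB] at hA
    rw [Finset.sum_range_succ'] at hA
    have hg0 : ∫ x in (((0:ℕ)):ℝ)..(((0+1:ℕ)):ℝ), psi x / x ^ (2 - 1/α) = α^2/(α+1) := by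
      push_cast
      exact I0_eq hα1
    rw [hg0] at hA
    have hterm : ∀ n ∈ Finset.range K,
        (∫ t in (0:ℝ)..1, (t - t^2) * ((((n:ℝ)+1+t) ^ (-(1-1/α)) - ((n:ℝ)+2+t) ^ (-(1-1/α))) / (1-1/α)))
        ≤ ∫ x in (((n+1:ℕ)):ℝ)..(((n+1+1:ℕ)):ℝ), psi x / x ^ (2 - 1/α) := by
      intro n _
      have h1 : IntervalIntegrable (fun x => psi x / x ^ (1 + (1-1/α))) volume
          ((n:ℝ)+1) ((n:ℝ)+2) := by
        have h := hik (n+1)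
        rw [show (((n+1:ℕ)):ℝ) = (n:ℝ)+1 by push_cast; ring] at h
        rw [show ((n:ℝ)+1)+1 = (n:ℝ)+2 by ring] at h
        rw [← hs]
        exact h
      have h2 := In_ge hβ1 hβ2 n h1
      rw [← hs] at h2
      refine h2.trans (le_of_eq ?_)
      congr 1 <;> push_cast <;> ring
    have hsum := Finset.sum_le_sum hterm
    have hC := sum_bound hβ1 hβ2 K
    calc α^2/(α+1) + ((2:ℝ)^(-(1-1/α)) - ((K:ℝ)+1)^(-(1-1/α)))/(6*(1-1/α))
        ≤ α^2/(α+1) + ∑ n ∈ Finset.range K,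
            ∫ t in (0:ℝ)..1, (t - t^2) * ((((n:ℝ)+1+t) ^ (-(1-1/α)) - ((n:ℝ)+2+t) ^ (-(1-1/α))) / (1-1/α)) := by
          linarith
      _ ≤ α^2/(α+1) + ∑ n ∈ Finset.range K,
            ∫ x in (((n+1:ℕ)):ℝ)..(((n+1+1:ℕ)):ℝ), psi x / x ^ (2 - 1/α) := by
          linarith
      _ ≤ ∫ x in Set.Ioi (0:ℝ), psi x / x ^ (2 - 1/α) := by linarith
  have hlim : Filter.Tendsto
      (fun K : ℕ => α^2/(α+1) + ((2:ℝ)^(-(1-1/α)) - ((K:ℝ)+1)^(-(1-1/α)))/(6*(1-1/α)))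
      Filter.atTop (nhds (α^2/(α+1) + ((2:ℝ)^(-(1-1/α)) - 0)/(6*(1-1/α)))) := by
    apply Filter.Tendsto.const_add
    apply Filter.Tendsto.div_const
    apply Filter.Tendsto.const_sub
    have h1 : Filter.Tendsto (fun K : ℕ => (K:ℝ)+1) Filter.atTop Filter.atTop :=
      Filter.tendsto_atTop_add_const_right _ 1 tendsto_natCast_atTop_atTop
    exact (tendsto_rpow_neg_atTop hβ1).comp h1
  have hfin := le_of_tendsto' hlim hstep
  rw [sub_zero] at hfin
  exact le_trans (final_ineq hα1 hα2) hfin
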